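/- arXiv:0704.0036 — 3 statements merged into one kernel-verified Lean document; each statement's English description precedes it below -/
import Mathlib

section
/- Fix n even, γ > 0, and S > 0. For any choice of n+1 distinct positive reals u_1 < ... < u_{n+1} with product u_1···u_{n+1} = γ, there exist positive constants λ_i = 1, K_i > 0, and β_i > 0 (i = 0,...,n−1) such that the polynomial f(u) of the previous context equals (u − u_1)(u − u_2)···(u − u_{n+1}). In particular, f has n+1 distinct positive roots. -/
open Polynomial Finset

noncomputable def phi0 (lam : ℕ → ℝ) (n : ℕ) : Polynomial ℝ :=
  ∑ i ∈ range (n + 1), C (∏ j ∈ range i, lam j) * X ^ i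

noncomputable def phi1 (lam K : ℕ → ℝ) (n : ℕ) : Polynomial ℝ :=
  ∑ i ∈ range n, C ((∏ j ∈ range i, lam j) / K i) * X ^ i

noncomputable def phi2 (lam L : ℕ → ℝ) (n : ℕ) : Polynomial ℝ :=
  ∑ i ∈ range n, C ((∏ j ∈ range (i + 1), lam j) / L i) * X ^ (i + 1)

theorem stmt7 (n : ℕ) (hn : Even n) (γ S : ℝ) (hγ : 0 < γ) (hS : 0 < S)
    (u : Fin (n + 1) → ℝ) (hpos : ∀ i, 0 < u i) (hmono : StrictMono u)
    (hprod : ∏ i, u i = γ) :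
    ∃ K β : ℕ → ℝ, (∀ i < n, 0 < K i ∧ 0 < β i) ∧
      X * phi0 (fun _ => 1) n
        + C S * (X * phi1 (fun _ => 1) K n
            - C γ * phi2 (fun _ => 1) (fun i => K i / β i) n)
        - C γ * phi0 (fun _ => 1) n = ∏ i, (X - C (u i)) := by
  set p : Polynomial ℝ := ∏ i, (X - C (u i)) with hp
  have hmon : p.Monic := monic_prod_of_monic _ _ fun i _ => monic_X_sub_C (u i)
  have hdeg : p.natDegree = n + 1 := by
    rw [hp, natDegree_prod _ _ (fun i _ => X_sub_C_ne_zero (u i))]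
    simp
  have hc0 : p.coeff 0 = -γ := by
    have h0 : p.coeff 0 = p.eval 0 := by simp [coeff_zero_eq_eval_zero]
    rw [h0, hp, eval_prod]
    simp only [eval_sub, eval_X, eval_C, zero_sub]
    have hneg : ∀ x : Fin (n+1), -u x = (-1) * u x := fun x => by ring
    simp_rw [hneg, Finset.prod_mul_distrib, Finset.prod_const, Finset.card_univ,
      Fintype.card_fin, hprod]
    have : Odd (n + 1) := Even.add_one hn
    rw [this.neg_one_pow]
    ring
  set c : ℕ → ℝ := fun i => p.coeff (i + 1) - 1 + γ with hc
  set K : ℕ → ℝ := fun i => S / (2 * (1 + |c i|)) with hK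
  set β : ℕ → ℝ := fun i => (1 - c i / (2 * (1 + |c i|))) / γ with hβ
  have hd : ∀ i, (0:ℝ) < 2 * (1 + |c i|) := fun i => by positivity
  have hKpos : ∀ i, 0 < K i := fun i => div_pos hS (hd i)
  have hβpos : ∀ i, 0 < β i := by
    intro i
    apply div_pos _ hγ
    have h1 : c i / (2 * (1 + |c i|)) < 1 := by
      rw [div_lt_one (hd i)]
      have h2 := le_abs_self (c i)
      have h3 := abs_nonneg (c i)
      linarith
    linarith
  refine ⟨K, β, fun i _ => ⟨hKpos i, hβpos i⟩, ?_⟩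
  -- scalar identity
  have key : ∀ i, 1 - γ + (S / K i - S * γ * (β i / K i)) = p.coeff (i + 1) := by
    intro i
    have hd' := (hd i).ne'
    have hK' := (hKpos i).ne'
    have hγ' := hγ.ne'
    rw [hβ]
    simp only
    rw [hK]
    simp only
    field_simp
    ring
  -- polynomial pieces
  have e0 : X * phi0 (fun _ => 1) n = ∑ i ∈ range (n+1), (X:ℝ[X])^(i+1) := by
    rw [phi0, Finset.mul_sum]
    refine Finset.sum_congr rfl fun i _ => ?_
    simp [pow_succ, mul_comm]
  have e1 : C S * (X * phi1 (fun _ => 1) K n) = ∑ i ∈ range n, C (S / K i) * (X:ℝ[X])^(i+1) := by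
    rw [phi1, Finset.mul_sum, Finset.mul_sum]
    refine Finset.sum_congr rfl fun i _ => ?_
    simp only [Finset.prod_const_one]
    have hCs : C (S / K i) = C S * C ((1:ℝ) / K i) := by rw [← map_mul]; ring_nf
    rw [hCs, pow_succ]
    ring
  have e2 : C S * (C γ * phi2 (fun _ => 1) (fun i => K i / β i) n)
      = ∑ i ∈ range n, C (S * γ * (β i / K i)) * (X:ℝ[X])^(i+1) := by
    rw [phi2, Finset.mul_sum, Finset.mul_sum]
    refine Finset.sum_congr rfl fun i _ => ?_
    have : (∏ j ∈ range (i+1), (1:ℝ)) / (K i / β i) = β i / K i := by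
      rw [Finset.prod_const_one, one_div, inv_div]
    have hCs : C (S * γ * (β i / K i)) = C S * (C γ * C (β i / K i)) := by
      rw [← map_mul, ← map_mul, mul_assoc]
    rw [this, hCs]; ring
  have e3 : C γ * phi0 (fun _ => 1) n = C γ + ∑ i ∈ range n, C γ * (X:ℝ[X])^(i+1) := by
    rw [phi0, Finset.mul_sum, Finset.sum_range_succ']
    simp [add_comm]
  have etop : p.coeff (n+1) = 1 := by
    have := hmon.coeff_natDegree
    rwa [hdeg] at this
  have hpsum : p = C (-γ) + (∑ i ∈ range n, C (p.coeff (i+1)) * X^(i+1) + X^(n+1)) := by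
    conv_lhs => rw [p.as_sum_range' (n+2) (by omega)]
    simp_rw [← Polynomial.C_mul_X_pow_eq_monomial]
    rw [Finset.sum_range_succ' (fun i => C (p.coeff i) * X^i) (n+1), Finset.sum_range_succ]
    rw [hc0, etop]
    simp [add_comm]
  have hsum : ∑ i ∈ range n, ((X:ℝ[X])^(i+1)
        + (C (S / K i) * X^(i+1) - C (S * γ * (β i / K i)) * X^(i+1))
        - C γ * X^(i+1))
      = ∑ i ∈ range n, C (p.coeff (i+1)) * X^(i+1) := by
    refine Finset.sum_congr rfl fun i _ => ?_
    rw [← key i]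
    simp only [map_add, map_sub, map_one, map_mul]
    ring
  simp only [Finset.sum_add_distrib, Finset.sum_sub_distrib] at hsum
  rw [mul_sub, e0, e1, e2, e3, hpsum, Finset.sum_range_succ, map_neg]
  linear_combination hsum
end

section
/- Let f(u) = c u^{n+1} + Σ_{i=1}^{n} b_i u^i − γ with c > 0, γ > 0, where b_i = λ_0···λ_{i-2}(1 + (S/K_{i-1})(1 − γβ_{i-1}) − γλ_{i-1}) as in the reduced steady-state polynomial. Suppose ū > 0 satisfies f(ū) = 0 and the condition S·|1 − γβ_j|/K_j ≤ 1/n holds for all j = 0, ..., n−1. Then f'(ū) > 0. -/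
open Polynomial Finset

noncomputable def aa (lam : ℕ → ℝ) (i : ℕ) : ℝ := ∏ j ∈ Finset.range i, lam j

noncomputable def ss (lam K β : ℕ → ℝ) (γ S : ℝ) (j : ℕ) : ℝ :=
  S * (aa lam j / K j) * (1 - γ * β j)

theorem stmt9 (n : ℕ) (lam K β : ℕ → ℝ) (γ S : ℝ)
    (hlam : ∀ i < n, 0 < lam i) (hK : ∀ i < n, 0 < K i) (hβ : ∀ i < n, 0 < β i)
    (hγ : 0 < γ) (hS : 0 < S)
    (hcond : ∀ j < n, S * |1 - γ * β j| / K j ≤ 1 / n) :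
    let f := X * phi0 lam n
      + C S * (X * phi1 lam K n - C γ * phi2 lam (fun i => lam i * K i / β i) n)
      - C γ * phi0 lam n
    ∀ ubar : ℝ, 0 < ubar → f.eval ubar = 0 → 0 < f.derivative.eval ubar := by
  intro f u hu hf
  have hfdef : f = X * phi0 lam n
      + C S * (X * phi1 lam K n - C γ * phi2 lam (fun i => lam i * K i / β i) n)
      - C γ * phi0 lam n := rfl
  have hapos : ∀ i ≤ n, 0 < aa lam i := fun i hi =>
    Finset.prod_pos fun j hj => hlam j (lt_of_lt_of_le (mem_range.mp hj) hi)
  -- polynomial normal form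
  have h0 : X * phi0 lam n = ∑ j ∈ range (n+1), C (aa lam j) * X ^ (j+1) := by
    rw [phi0, mul_sum]
    exact sum_congr rfl fun j _ => by rw [aa]; ring
  have h1 : X * phi1 lam K n = ∑ j ∈ range n, C (aa lam j / K j) * X ^ (j+1) := by
    rw [phi1, mul_sum]
    exact sum_congr rfl fun j _ => by rw [aa]; ring
  have h2 : phi2 lam (fun i => lam i * K i / β i) n
      = ∑ j ∈ range n, C (aa lam j * β j / K j) * X ^ (j+1) := by
    rw [phi2]
    refine sum_congr rfl fun j hj => ?_
    have hj' := mem_range.mp hj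
    have hl := (hlam j hj').ne'
    have hk := (hK j hj').ne'
    have hb := (hβ j hj').ne'
    have : (∏ k ∈ range (j+1), lam k) / (lam j * K j / β j) = aa lam j * β j / K j := by
      rw [prod_range_succ, aa]
      field_simp
    rw [this]
  have h3 : C S * (X * phi1 lam K n - C γ * phi2 lam (fun i => lam i * K i / β i) n)
      = ∑ j ∈ range n, C (ss lam K β γ S j) * X ^ (j+1) := by
    rw [h1, h2, mul_sub, mul_sum, mul_sum, mul_sum, ← sum_sub_distrib]
    refine sum_congr rfl fun j _ => ?_
    have : ss lam K β γ S j = S * (aa lam j / K j) - S * (γ * (aa lam j * β j / K j)) := by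
      rw [ss]; ring
    rw [this, C_sub, C_mul, C_mul, C_mul]
    ring
  have hfp : f = (∑ j ∈ range (n+1), C (aa lam j) * X ^ (j+1))
      + (∑ j ∈ range n, C (ss lam K β γ S j) * X ^ (j+1))
      - C γ * (∑ i ∈ range (n+1), C (aa lam i) * X ^ i) := by
    rw [hfdef, h0, h3, phi0]
    rfl
  -- eval of f
  have hfe : (0:ℝ) = (∑ j ∈ range (n+1), aa lam j * u ^ (j+1))
      + (∑ j ∈ range n, ss lam K β γ S j * u ^ (j+1))
      - γ * (∑ i ∈ range (n+1), aa lam i * u ^ i) := by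
    rw [← hf, hfp]
    simp [eval_finset_sum]
  -- eval of derivative times u
  have hde : f.derivative.eval u * u
      = (∑ j ∈ range (n+1), ((j:ℝ)+1) * aa lam j * u ^ (j+1))
      + (∑ j ∈ range n, ((j:ℝ)+1) * ss lam K β γ S j * u ^ (j+1))
      - γ * (∑ i ∈ range (n+1), (i:ℝ) * aa lam i * u ^ i) := by
    rw [hfp]
    simp only [derivative_sub, derivative_add, derivative_sum, derivative_mul, derivative_C,
      zero_mul, zero_add, derivative_X_pow, Nat.add_sub_cancel, eval_sub, eval_add, eval_mul,
      eval_C, eval_finset_sum, eval_pow, eval_X, eval_natCast]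
    rw [sub_mul, add_mul, sum_mul, sum_mul, mul_assoc γ, sum_mul]
    congr 1
    · congr 1
      · exact sum_congr rfl fun j _ => by push_cast; rw [pow_succ]; ring
      · exact sum_congr rfl fun j _ => by push_cast; rw [pow_succ]; ring
    · refine congrArg _ (sum_congr rfl fun i _ => ?_)
      cases i with
      | zero => simp
      | succ k =>
        simp only [Nat.add_sub_cancel]
        push_cast
        rw [pow_succ]
        ring
  -- key relation from f(u)=0
  have hkey : γ * (∑ i ∈ range (n+1), aa lam i * u ^ i)
      = (∑ j ∈ range (n+1), aa lam j * u ^ (j+1))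
      + (∑ j ∈ range n, ss lam K β γ S j * u ^ (j+1)) := by linarith [hfe]
  have hq1 : (∑ i ∈ range (n+1), aa lam i * u ^ i)
        * (∑ j ∈ range (n+1), ((j:ℝ)+1) * aa lam j * u ^ (j+1))
      - (∑ i ∈ range (n+1), (i:ℝ) * aa lam i * u ^ i)
        * (∑ j ∈ range (n+1), aa lam j * u ^ (j+1))
      = ∑ i ∈ range (n+1), ∑ j ∈ range (n+1),
          aa lam i * aa lam j * ((j:ℝ)+1-(i:ℝ)) * u ^ (i+j+1) := by
    rw [sum_mul_sum, sum_mul_sum, ← sum_sub_distrib]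
    refine sum_congr rfl fun i _ => ?_
    rw [← sum_sub_distrib]
    refine sum_congr rfl fun j _ => ?_
    ring
  have hq2 : (∑ i ∈ range (n+1), aa lam i * u ^ i)
        * (∑ j ∈ range n, ((j:ℝ)+1) * ss lam K β γ S j * u ^ (j+1))
      - (∑ i ∈ range (n+1), (i:ℝ) * aa lam i * u ^ i)
        * (∑ j ∈ range n, ss lam K β γ S j * u ^ (j+1))
      = ∑ i ∈ range (n+1), ∑ j ∈ range n,
          aa lam i * ss lam K β γ S j * ((j:ℝ)+1-(i:ℝ)) * u ^ (i+j+1) := by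
    rw [sum_mul_sum, sum_mul_sum, ← sum_sub_distrib]
    refine sum_congr rfl fun i _ => ?_
    rw [← sum_sub_distrib]
    refine sum_congr rfl fun j _ => ?_
    ring
  have hzero : (∑ i ∈ range (n+1), ∑ j ∈ range (n+1),
      aa lam i * aa lam j * ((j:ℝ)-(i:ℝ)) * u ^ (i+j+1)) = 0 := by
    have h := Finset.sum_comm (s := range (n+1)) (t := range (n+1))
      (f := fun i j => aa lam i * aa lam j * ((j:ℝ)-(i:ℝ)) * u ^ (i+j+1))
    have h2 : (∑ j ∈ range (n+1), ∑ i ∈ range (n+1),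
        aa lam i * aa lam j * ((j:ℝ)-(i:ℝ)) * u ^ (i+j+1))
        = -(∑ i ∈ range (n+1), ∑ j ∈ range (n+1),
        aa lam i * aa lam j * ((j:ℝ)-(i:ℝ)) * u ^ (i+j+1)) := by
      rw [← Finset.sum_neg_distrib]
      refine sum_congr rfl fun j _ => ?_
      rw [← Finset.sum_neg_distrib]
      refine sum_congr rfl fun i _ => ?_
      rw [show j + i + 1 = i + j + 1 from by ring]
      ring
    linarith [h, h2]
  have hsym : (∑ i ∈ range (n+1), ∑ j ∈ range (n+1),
      aa lam i * aa lam j * ((j:ℝ)+1-(i:ℝ)) * u ^ (i+j+1))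
      = ∑ i ∈ range (n+1), ∑ j ∈ range (n+1), aa lam i * aa lam j * u ^ (i+j+1) := by
    have e : (∑ i ∈ range (n+1), ∑ j ∈ range (n+1),
        aa lam i * aa lam j * ((j:ℝ)+1-(i:ℝ)) * u ^ (i+j+1))
        = (∑ i ∈ range (n+1), ∑ j ∈ range (n+1), aa lam i * aa lam j * u ^ (i+j+1))
        + (∑ i ∈ range (n+1), ∑ j ∈ range (n+1),
           aa lam i * aa lam j * ((j:ℝ)-(i:ℝ)) * u ^ (i+j+1)) := by
      rw [← sum_add_distrib]
      refine sum_congr rfl fun i _ => ?_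
      rw [← sum_add_distrib]
      refine sum_congr rfl fun j _ => ?_
      ring
    rw [e, hzero, add_zero]
  have hAD : (∑ i ∈ range (n+1), aa lam i * u ^ i) * (f.derivative.eval u * u)
      = (∑ i ∈ range (n+1), ∑ j ∈ range (n+1), aa lam i * aa lam j * u ^ (i+j+1))
      + (∑ i ∈ range (n+1), ∑ j ∈ range n,
          aa lam i * ss lam K β γ S j * ((j:ℝ)+1-(i:ℝ)) * u ^ (i+j+1)) := by
    rw [hde, ← hsym, ← hq1, ← hq2]
    linear_combination (-(∑ i ∈ range (n+1), (i:ℝ) * aa lam i * u ^ i)) * hkey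
  have hAD2 : (∑ i ∈ range (n+1), aa lam i * u ^ i) * (f.derivative.eval u * u)
      = ∑ i ∈ range (n+1), ((∑ j ∈ range n, (aa lam i * aa lam j * u ^ (i+j+1)
          + aa lam i * ss lam K β γ S j * ((j:ℝ)+1-(i:ℝ)) * u ^ (i+j+1)))
        + aa lam i * aa lam n * u ^ (i+n+1)) := by
    rw [hAD, ← sum_add_distrib]
    refine sum_congr rfl fun i _ => ?_
    rw [sum_range_succ, sum_add_distrib]
    ring
  have hbound : ∀ i ≤ n, ∀ j < n,
      0 ≤ aa lam j + ss lam K β γ S j * ((j:ℝ)+1-(i:ℝ)) := by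
    intro i hi j hj
    have hn1 : 1 ≤ n := Nat.one_le_iff_ne_zero.mpr (by rintro rfl; exact Nat.not_lt_zero j hj)
    have hnR : (1:ℝ) ≤ n := by exact_mod_cast hn1
    have haj := hapos j (le_of_lt hj)
    have hKj := hK j hj
    have habs : |ss lam K β γ S j| ≤ aa lam j * (1/(n:ℝ)) := by
      rw [ss, abs_mul, abs_mul, abs_of_pos hS, abs_of_pos (div_pos haj hKj)]
      calc S * (aa lam j / K j) * |1 - γ * β j|
          = aa lam j * (S * |1 - γ * β j| / K j) := by ring
        _ ≤ aa lam j * (1/(n:ℝ)) := mul_le_mul_of_nonneg_left (hcond j hj) (le_of_lt haj)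
    have hc : |(j:ℝ)+1-(i:ℝ)| ≤ (n:ℝ) := by
      rw [abs_le]
      have hjn : (j:ℝ) + 1 ≤ (n:ℝ) := by exact_mod_cast Nat.succ_le_of_lt hj
      have hin : (i:ℝ) ≤ (n:ℝ) := by exact_mod_cast hi
      have hj0 : (0:ℝ) ≤ (j:ℝ) := Nat.cast_nonneg j
      have hi0 : (0:ℝ) ≤ (i:ℝ) := Nat.cast_nonneg i
      constructor <;> linarith
    have habs2 : |ss lam K β γ S j * ((j:ℝ)+1-(i:ℝ))| ≤ aa lam j := by
      rw [abs_mul]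
      calc |ss lam K β γ S j| * |(j:ℝ)+1-(i:ℝ)|
          ≤ (aa lam j * (1/(n:ℝ))) * (n:ℝ) :=
            mul_le_mul habs hc (abs_nonneg _) (by positivity)
        _ = aa lam j := by field_simp
    have := neg_abs_le (ss lam K β γ S j * ((j:ℝ)+1-(i:ℝ)))
    linarith
  have hApos : 0 < ∑ i ∈ range (n+1), aa lam i * u ^ i := by
    refine sum_pos (fun i hi => ?_) ⟨0, mem_range.mpr (Nat.succ_pos n)⟩
    exact mul_pos (hapos i (Nat.lt_succ_iff.mp (mem_range.mp hi))) (pow_pos hu i)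
  have hpos : 0 < (∑ i ∈ range (n+1), aa lam i * u ^ i) * (f.derivative.eval u * u) := by
    rw [hAD2]
    refine sum_pos (fun i hi => ?_) ⟨0, mem_range.mpr (Nat.succ_pos n)⟩
    have hi' : i ≤ n := Nat.lt_succ_iff.mp (mem_range.mp hi)
    refine add_pos_of_nonneg_of_pos (sum_nonneg fun j hj => ?_) ?_
    · have hj' := mem_range.mp hj
      have h1 := hbound i hi' j hj'
      have h2 : aa lam i * aa lam j * u ^ (i+j+1)
            + aa lam i * ss lam K β γ S j * ((j:ℝ)+1-(i:ℝ)) * u ^ (i+j+1)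
          = aa lam i * u ^ (i+j+1)
            * (aa lam j + ss lam K β γ S j * ((j:ℝ)+1-(i:ℝ))) := by ring
      rw [h2]
      exact mul_nonneg (le_of_lt (mul_pos (hapos i hi') (pow_pos hu _))) h1
    · exact mul_pos (mul_pos (hapos i hi') (hapos n le_rfl)) (pow_pos hu _)
  nlinarith [mul_pos hApos hu, hpos]
end

section
/- Let φ_0, φ_1, φ_2 be the polynomials of the futile cycle (φ_0 of degree n with positive coefficients and constant term 1; φ_1 of degree n−1 with positive coefficients; φ_2 of degree n with positive coefficients and zero constant term). For positive parameters E, F, S define P(u) = φ_0(u)φ_2(u)(E/F − u)² + (φ_0(u) − Sφ_2(u) + F u φ_1(u) + F φ_2(u))(E/F − u)(uφ_1(u) − (E/F)φ_2(u)) − S(uφ_1(u) − (E/F)φ_2(u))². Then P is divisible by u, the quotient Q(u) = P(u)/u is a polynomial of degree 2n+1 with leading coefficient (λ_0···λ_{n-1})²/L_{n-1} > 0 and constant term (E/F)·(1/K_0) > 0. In particular, Q has at most 2n positive real roots. -/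
open Polynomial Finset

lemma coeff_sum_CX (a : ℕ → ℝ) (m k : ℕ) :
    (∑ i ∈ range m, C (a i) * X ^ i).coeff k = if k < m then a k else 0 := by
  rw [finset_sum_coeff]
  simp only [coeff_C_mul, coeff_X_pow, mul_ite, mul_one, mul_zero]
  rw [Finset.sum_ite_eq (range m) k a]
  simp [mem_range]

lemma natDeg_sum_CX (a : ℕ → ℝ) (m : ℕ) :
    (∑ i ∈ range m, C (a i) * X ^ i).natDegree ≤ m - 1 := by
  rw [natDegree_le_iff_coeff_eq_zero]
  intro j hj
  rw [coeff_sum_CX]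
  have : ¬ j < m := by omega
  simp [this]


theorem stmt10 (n : ℕ) (hn : 0 < n) (lam K L : ℕ → ℝ)
    (hlam : ∀ i < n, 0 < lam i) (hK : ∀ i < n, 0 < K i) (hL : ∀ i < n, 0 < L i)
    (E F S : ℝ) (hE : 0 < E) (hF : 0 < F) (hS : 0 < S) :
    let φ0 := phi0 lam n
    let φ1 := phi1 lam K n
    let φ2 := phi2 lam L n
    let P := φ0 * φ2 * (C (E / F) - X) ^ 2
      + (φ0 - C S * φ2 + C F * X * φ1 + C F * φ2) * (C (E / F) - X)
          * (X * φ1 - C (E / F) * φ2)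
      - C S * (X * φ1 - C (E / F) * φ2) ^ 2
    ∃ Q : Polynomial ℝ, P = X * Q ∧ Q.natDegree = 2 * n + 1 ∧
      Q.leadingCoeff = (∏ j ∈ range n, lam j) ^ 2 / L (n - 1) ∧ 0 < Q.leadingCoeff ∧
      Q.coeff 0 = (E / F) * (1 / K 0) ∧ 0 < Q.coeff 0 ∧
      Multiset.card (Q.roots.filter (fun x => 0 < x)) ≤ 2 * n := by
  intro φ0 φ1 φ2 P
  have hcpos : 0 < E / F := div_pos hE hF
  set ψ2 : Polynomial ℝ :=
    ∑ i ∈ range n, C ((∏ j ∈ range (i + 1), lam j) / L i) * X ^ i with hψ2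
  have hφ2 : φ2 = X * ψ2 := by
    show phi2 lam L n = _
    rw [phi2, hψ2, Finset.mul_sum]
    exact Finset.sum_congr rfl fun i _ => by ring
  set Q : Polynomial ℝ :=
    φ0 * ψ2 * (C (E / F) - X) ^ 2
      + (φ0 - C S * φ2 + C F * X * φ1 + C F * φ2) * (C (E / F) - X)
          * (φ1 - C (E / F) * ψ2)
      - C S * X * (φ1 - C (E / F) * ψ2) ^ 2 with hQ
  have hbody : P = φ0 * φ2 * (C (E / F) - X) ^ 2
      + (φ0 - C S * φ2 + C F * X * φ1 + C F * φ2) * (C (E / F) - X)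
          * (X * φ1 - C (E / F) * φ2)
      - C S * (X * φ1 - C (E / F) * φ2) ^ 2 := rfl
  have hPQ : P = X * Q := by
    rw [hbody, hQ, hφ2]; ring
  -- coefficients of building blocks
  have hφ0c : ∀ k, φ0.coeff k = if k < n + 1 then ∏ j ∈ range k, lam j else 0 :=
    fun k => coeff_sum_CX _ _ k
  have hφ1c : ∀ k, φ1.coeff k =
      if k < n then (∏ j ∈ range k, lam j) / K k else 0 :=
    fun k => coeff_sum_CX _ _ k
  have hψ2c : ∀ k, ψ2.coeff k =
      if k < n then (∏ j ∈ range (k + 1), lam j) / L k else 0 :=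
    fun k => coeff_sum_CX _ _ k
  have hΛpos : ∀ m ≤ n, 0 < ∏ j ∈ range m, lam j := by
    intro m hm
    exact Finset.prod_pos fun j hj => hlam j (lt_of_lt_of_le (mem_range.mp hj) hm)
  -- natDegrees
  have hdφ0 : φ0.natDegree = n := by
    refine le_antisymm (le_trans (natDeg_sum_CX (fun i => ∏ j ∈ range i, lam j) (n + 1)) (by omega))
      (le_natDegree_of_ne_zero ?_)
    rw [hφ0c]; simp only [Nat.lt_succ_self, if_true]
    exact (hΛpos n le_rfl).ne'
  have hφ0lc : φ0.leadingCoeff = ∏ j ∈ range n, lam j := by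
    rw [leadingCoeff, hdφ0, hφ0c]; simp
  have hφ0ne : φ0 ≠ 0 := fun h => by
    rw [h, leadingCoeff_zero] at hφ0lc; exact (hΛpos n le_rfl).ne' hφ0lc.symm
  have hdψ2 : ψ2.natDegree = n - 1 := by
    refine le_antisymm (natDeg_sum_CX _ n) (le_natDegree_of_ne_zero ?_)
    rw [hψ2c]
    have h1 : n - 1 < n := by omega
    have h2 : n - 1 + 1 = n := by omega
    simp only [h1, if_true, h2]
    exact ne_of_gt (div_pos (hΛpos n le_rfl) (hL (n - 1) h1))
  have hψ2lc : ψ2.leadingCoeff = (∏ j ∈ range n, lam j) / L (n - 1) := by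
    rw [leadingCoeff, hdψ2, hψ2c]
    have h1 : n - 1 < n := by omega
    have h2 : n - 1 + 1 = n := by omega
    simp [h1, h2]
  have hψ2lcpos : 0 < ψ2.leadingCoeff := by
    rw [hψ2lc]; exact div_pos (hΛpos n le_rfl) (hL (n - 1) (by omega))
  have hψ2ne : ψ2 ≠ 0 := fun h => by simp [h] at hψ2lcpos
  have hdφ1 : φ1.natDegree ≤ n - 1 := natDeg_sum_CX _ n
  have hdφ2 : φ2.natDegree ≤ n := by
    rw [hφ2]
    refine (natDegree_mul_le).trans ?_
    simp only [natDegree_X, hdψ2]; omega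
  -- square factor
  have hsq : (C (E / F) - X) ^ 2 = (X - C (E / F)) ^ 2 := by ring
  have hdsq : ((C (E / F) - X) ^ 2).natDegree = 2 := by
    rw [hsq, natDegree_pow, natDegree_X_sub_C]
  have hlcsq : ((C (E / F) - X) ^ 2).leadingCoeff = 1 := by
    rw [hsq]; exact ((monic_X_sub_C (E / F)).pow 2).leadingCoeff
  have hsqne : ((C (E / F) - X) ^ 2) ≠ 0 := by
    rw [hsq]; exact ((monic_X_sub_C (E / F)).pow 2).ne_zero
  -- leading term t1
  have ht1d : (φ0 * ψ2 * (C (E / F) - X) ^ 2).natDegree = 2 * n + 1 := by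
    rw [natDegree_mul (mul_ne_zero hφ0ne hψ2ne) hsqne, natDegree_mul hφ0ne hψ2ne,
      hdφ0, hdψ2, hdsq]
    omega
  have ht1lc : (φ0 * ψ2 * (C (E / F) - X) ^ 2).coeff (2 * n + 1)
      = (∏ j ∈ range n, lam j) ^ 2 / L (n - 1) := by
    have : (φ0 * ψ2 * (C (E / F) - X) ^ 2).coeff (2 * n + 1)
        = (φ0 * ψ2 * (C (E / F) - X) ^ 2).leadingCoeff := by
      rw [leadingCoeff, ht1d]
    rw [this, leadingCoeff_mul, leadingCoeff_mul, hφ0lc, hψ2lc, hlcsq]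
    ring
  -- degree bounds on the other terms
  have hdcx : (C (E / F) - X).natDegree ≤ 1 := by
    refine (natDegree_sub_le _ _).trans ?_
    simp
  have hA : (φ0 - C S * φ2 + C F * X * φ1 + C F * φ2).natDegree ≤ n := by
    refine (natDegree_add_le _ _).trans (max_le ((natDegree_add_le _ _).trans
      (max_le ((natDegree_sub_le _ _).trans (max_le ?_ ?_)) ?_)) ?_)
    · omega
    · exact (natDegree_mul_le).trans (by simp [hdφ2])
    · refine (natDegree_mul_le).trans ?_
      have := natDegree_mul_le (p := (C F : Polynomial ℝ)) (q := (X : Polynomial ℝ))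
      simp only [natDegree_C, natDegree_X] at this ⊢
      omega
    · exact (natDegree_mul_le).trans (by simp [hdφ2])
  have hB : (φ1 - C (E / F) * ψ2).natDegree ≤ n - 1 := by
    refine (natDegree_sub_le _ _).trans (max_le hdφ1 ?_)
    exact (natDegree_mul_le).trans (by simp [hdψ2])
  have ht2d : ((φ0 - C S * φ2 + C F * X * φ1 + C F * φ2) * (C (E / F) - X)
      * (φ1 - C (E / F) * ψ2)).natDegree ≤ 2 * n := by
    refine (natDegree_mul_le).trans ?_
    have := (natDegree_mul_le (p := φ0 - C S * φ2 + C F * X * φ1 + C F * φ2)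
      (q := C (E / F) - X))
    omega
  have ht3d : (C S * X * (φ1 - C (E / F) * ψ2) ^ 2).natDegree ≤ 2 * n := by
    refine (natDegree_mul_le).trans ?_
    have h1 := natDegree_mul_le (p := (C S : Polynomial ℝ)) (q := (X : Polynomial ℝ))
    have h2 : ((φ1 - C (E / F) * ψ2) ^ 2).natDegree ≤ 2 * (n - 1) := by
      rw [natDegree_pow]; omega
    simp only [natDegree_C, natDegree_X] at h1
    omega
  -- top coefficient of Q
  have hQtop : Q.coeff (2 * n + 1) = (∏ j ∈ range n, lam j) ^ 2 / L (n - 1) := by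
    rw [hQ, coeff_sub, coeff_add, ht1lc,
      coeff_eq_zero_of_natDegree_lt (lt_of_le_of_lt ht2d (by omega)),
      coeff_eq_zero_of_natDegree_lt (lt_of_le_of_lt ht3d (by omega))]
    ring
  have hQtoppos : 0 < Q.coeff (2 * n + 1) := by
    rw [hQtop]
    exact div_pos (pow_pos (hΛpos n le_rfl) 2) (hL (n - 1) (by omega))
  have hQd : Q.natDegree = 2 * n + 1 := by
    refine natDegree_eq_of_le_of_coeff_ne_zero ?_ hQtoppos.ne'
    rw [hQ]
    refine (natDegree_sub_le _ _).trans (max_le ((natDegree_add_le _ _).trans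
      (max_le (le_of_eq ht1d) (ht2d.trans (by omega)))) (ht3d.trans (by omega)))
  have hQlc : Q.leadingCoeff = (∏ j ∈ range n, lam j) ^ 2 / L (n - 1) := by
    rw [leadingCoeff, hQd, hQtop]
  have hQlcpos : 0 < Q.leadingCoeff := hQlc ▸ (by
    exact div_pos (pow_pos (hΛpos n le_rfl) 2) (hL (n - 1) (by omega)))
  have hQne : Q ≠ 0 := fun h => by simp [h] at hQlcpos
  -- constant coefficient of Q
  have hc0 : Q.coeff 0 = (E / F) * (1 / K 0) := by
    have e0 : φ0.coeff 0 = 1 := by rw [hφ0c]; simp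
    have e1 : φ1.coeff 0 = 1 / K 0 := by rw [hφ1c]; simp [hn]
    have e2 : ψ2.coeff 0 = lam 0 / L 0 := by rw [hψ2c]; simp [hn]
    have e3 : φ2.coeff 0 = 0 := by rw [hφ2]; simp [mul_coeff_zero]
    rw [hQ]
    simp only [coeff_sub, coeff_add, mul_coeff_zero, coeff_C, pow_two]
    simp only [coeff_sub, coeff_add, mul_coeff_zero, e0, e1, e2, e3, coeff_X_zero, coeff_C]
    have hF' : F ≠ 0 := hF.ne'
    have hK' : K 0 ≠ 0 := (hK 0 hn).ne'
    have hL' : L 0 ≠ 0 := (hL 0 hn).ne'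
    simp only [eq_self_iff_true, if_true]
    field_simp
    ring
  have hc0pos : 0 < Q.coeff 0 := by
    rw [hc0]
    exact mul_pos hcpos (by have := hK 0 hn; positivity)
  -- Q has a nonpositive real root
  have hroot : ∃ r : ℝ, r ≤ 0 ∧ Q.IsRoot r := by
    set R : Polynomial ℝ := Q.comp (-X) with hR
    have hdX : (-X : Polynomial ℝ).natDegree = 1 := by simp
    have hRd : R.natDegree = 2 * n + 1 := by
      rw [hR, natDegree_comp, hdX, hQd, mul_one]
    have hRlc : R.leadingCoeff = -Q.leadingCoeff := by
      rw [hR, leadingCoeff_comp (by simp), hQd]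
      have : (-X : Polynomial ℝ).leadingCoeff = -1 := by
        simp [leadingCoeff_neg (X : Polynomial ℝ)]
      rw [this, Odd.neg_one_pow (by exact ⟨n, by ring⟩)]
      ring
    have hRne : R ≠ 0 := fun h => by
      rw [h, natDegree_zero] at hRd; omega
    have hRdeg : 0 < R.degree := by
      rw [degree_eq_natDegree hRne, hRd]
      exact_mod_cast Nat.succ_pos _
    have htend : Filter.Tendsto (fun x => R.eval x) Filter.atTop Filter.atBot :=
      R.tendsto_atBot_of_leadingCoeff_nonpos hRdeg (by rw [hRlc]; linarith)
    obtain ⟨x, hx1, hx2⟩ :=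
      ((htend.eventually (Filter.eventually_lt_atBot (0:ℝ))).and
        (Filter.eventually_ge_atTop (0:ℝ))).exists
    have hxval : Q.eval (-x) < 0 := by
      have : R.eval x = Q.eval (-x) := by rw [hR, eval_comp, eval_neg, eval_X]
      linarith [this ▸ hx1]
    have h0val : 0 < Q.eval 0 := by
      rwa [← coeff_zero_eq_eval_zero]
    have hcont : ContinuousOn (fun y => Q.eval y) (Set.Icc (-x) 0) :=
      (Polynomial.continuous Q).continuousOn
    have hmem : (0:ℝ) ∈ Set.Icc (Q.eval (-x)) (Q.eval 0) :=
      ⟨le_of_lt hxval, le_of_lt h0val⟩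
    obtain ⟨r, hr1, hr2⟩ := intermediate_value_Icc (by linarith : (-x:ℝ) ≤ 0) hcont hmem
    exact ⟨r, hr1.2, hr2⟩
  obtain ⟨r, hr0, hrroot⟩ := hroot
  have hrmem : r ∈ Q.roots := by
    rw [mem_roots hQne]; exact hrroot
  -- count positive roots
  have hcount : Multiset.card (Q.roots.filter (fun x => 0 < x)) ≤ 2 * n := by
    have hsplit := Multiset.filter_add_not (fun x => 0 < x) Q.roots
    have hcards : Multiset.card (Q.roots.filter (fun x => 0 < x))
        + Multiset.card (Q.roots.filter (fun x => ¬ 0 < x)) = Multiset.card Q.roots := by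
      rw [← Multiset.card_add, hsplit]
    have hmem2 : r ∈ Q.roots.filter (fun x => ¬ 0 < x) :=
      Multiset.mem_filter.mpr ⟨hrmem, not_lt.mpr hr0⟩
    have h1 : 1 ≤ Multiset.card (Q.roots.filter (fun x => ¬ 0 < x)) :=
      Multiset.card_pos_iff_exists_mem.mpr ⟨r, hmem2⟩
    have htot : Multiset.card Q.roots ≤ 2 * n + 1 := hQd ▸ Q.card_roots'
    omega
  exact ⟨Q, hPQ, hQd, hQlc, hQlcpos, hc0, hc0pos, hcount⟩
end
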